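/- If (μ_t, ν_t, ζ_t)_{t∈[0,1]} are Borel families of measures with the disintegrated space-time measures μ = ∫₀¹ δ_t ⊗ μ_t dt, ν = ∫₀¹ δ_t ⊗ ν_t dt, ζ = ∫₀¹ δ_t ⊗ ζ_t dt, then the time-integrated action equals the space-time action: ∫₀¹ D^D(μ_t,ν_t,ζ_t) dt = D^{[0,1]×D}(μ,ν,ζ). -/

import Mathlib

open scoped ENNReal
open Classical MeasureTheory

/-- The Benamou–Brenier integrand `φ(u,w) = |w|²/u` for `u > 0`, `φ(0,0) = 0`,
`φ(0,w) = +∞` for `w ≠ 0`. -/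
noncomputable def bbPhi {d : ℕ} (u : ℝ) (w : EuclideanSpace ℝ (Fin d)) : ℝ≥0∞ :=
  if 0 < u then ENNReal.ofReal (‖w‖ ^ 2 / u) else if w = 0 then 0 else ⊤

/-- The Benamou–Brenier action `A_BB(μ,ν)` on a domain with reference measure `L`.
The vector measure `ν` is given in polar form `ν = w · σ` with `σ = |ν|` and
`‖w‖ = 1` `σ`-a.e.; the functional is computed from the Lebesgue decompositions
of `μ` and `σ` with respect to `L`, the singular parts being written with respect
to a dominating measure `L^⊥`. -/
noncomputable def Abb {α : Type*} [MeasurableSpace α] {d : ℕ}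
    (L μ σ : Measure α) (w : α → EuclideanSpace ℝ (Fin d)) : ℝ≥0∞ :=
  (∫⁻ x, bbPhi ((μ.rnDeriv L x).toReal) (((σ.rnDeriv L x).toReal : ℝ) • w x) ∂L)
    + ∫⁻ x, bbPhi (((μ.singularPart L).rnDeriv (μ.singularPart L + σ.singularPart L) x).toReal)
        ((((σ.singularPart L).rnDeriv (μ.singularPart L + σ.singularPart L) x).toReal : ℝ) • w x)
        ∂(μ.singularPart L + σ.singularPart L)

/-- The source cost `A_Z(ζ) = ∫ z² d𝓛` if `ζ = z·𝓛` is absolutely continuous, `+∞`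
otherwise.  The signed measure `ζ` is given in polar form `ζ = s · ρ` with `ρ = |ζ|`. -/
noncomputable def Az {α : Type*} [MeasurableSpace α]
    (L ρ : Measure α) (s : α → ℝ) : ℝ≥0∞ :=
  if ρ ≪ L then ∫⁻ x, ENNReal.ofReal (((ρ.rnDeriv L x).toReal * s x) ^ 2) ∂L else ⊤

/-- The combined action functional `D(μ,ν,ζ) = A_BB(μ,ν) + (1/δ)·A_Z(ζ)`. -/
noncomputable def Dact {α : Type*} [MeasurableSpace α] {d : ℕ} (δ : ℝ)
    (L μ σ : Measure α) (w : α → EuclideanSpace ℝ (Fin d))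
    (ρ : Measure α) (s : α → ℝ) : ℝ≥0∞ :=
  Abb L μ σ w + ENNReal.ofReal (1 / δ) * Az L ρ s

/-- The space-time measure `∫₀¹ δ_t ⊗ μ_t dt` on `[0,1] × D`. -/
noncomputable def timeDisintegration {d : ℕ}
    (μ : ℝ → Measure (EuclideanSpace ℝ (Fin d))) :
    Measure (ℝ × EuclideanSpace ℝ (Fin d)) :=
  (volume.restrict (Set.Icc (0:ℝ) 1)).bind fun t => (μ t).map fun x => (t, x)

section ActionAux

open MeasureTheory ProbabilityTheory Set
open scoped NNReal

variable {α γ : Type*} {mα : MeasurableSpace α} {mγ : MeasurableSpace γ}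

section CompProdDecomp

variable (T : Measure α) [SFinite T] (κ η : Kernel α γ) [IsFiniteKernel κ] [IsFiniteKernel η]

lemma ActionAux.compProd_sigmaFinite [SigmaFinite T] : SigmaFinite (T ⊗ₘ η) := by
  refine ⟨⟨{ set := fun n => spanningSets T n ×ˢ univ
             set_mem := fun _ => trivial
             finite := fun n => ?_
             spanning := ?_ }⟩⟩
  · rw [Measure.compProd_apply ((measurableSet_spanningSets T n).prod MeasurableSet.univ)]
    calc ∫⁻ a, (η a) (Prod.mk a ⁻¹' spanningSets T n ×ˢ univ) ∂T
        ≤ ∫⁻ a in spanningSets T n, η.bound ∂T := by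
          rw [← lintegral_indicator (measurableSet_spanningSets T n)]
          refine lintegral_mono fun a => ?_
          by_cases ha : a ∈ spanningSets T n
          · simp only [indicator_of_mem ha]
            exact (measure_mono (subset_univ _)).trans (Kernel.measure_le_bound η a univ)
          · have he : Prod.mk a ⁻¹' (spanningSets T n ×ˢ (univ : Set γ)) = ∅ := by
              ext x; simp [ha]
            simp [indicator_of_notMem ha, he]
      _ < ⊤ := by
          rw [lintegral_const, Measure.restrict_apply_univ]
          exact ENNReal.mul_lt_top (η.bound_lt_top)
            (measure_spanningSets_lt_top T n)
  · rw [← iUnion_prod_const, iUnion_spanningSets, univ_prod_univ]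

variable [MeasurableSpace.CountableOrCountablyGenerated α γ]

lemma ActionAux.compProd_withDensity_rnDeriv :
    T ⊗ₘ (Kernel.withDensity η (Kernel.rnDeriv κ η))
      = (T ⊗ₘ η).withDensity (fun p => Kernel.rnDeriv κ η p.1 p.2) := by
  have hm := Kernel.measurable_rnDeriv κ η
  ext s hs
  rw [Measure.compProd_apply hs, withDensity_apply _ hs,
    ← lintegral_indicator hs, Measure.lintegral_compProd (hm.indicator hs)]
  refine lintegral_congr fun a => ?_
  rw [Kernel.withDensity_apply' _ hm, ← lintegral_indicator (measurable_prodMk_left hs)]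
  congr 1

lemma ActionAux.compProd_singularPart_mutuallySingular :
    (T ⊗ₘ Kernel.singularPart κ η) ⟂ₘ (T ⊗ₘ η) := by
  refine ⟨(Kernel.mutuallySingularSet κ η)ᶜ,
    (Kernel.measurableSet_mutuallySingularSet κ η).compl, ?_, ?_⟩
  · rw [Measure.compProd_apply (Kernel.measurableSet_mutuallySingularSet κ η).compl]
    refine lintegral_eq_zero_iff ?_ |>.mpr ?_
    · exact Kernel.measurable_kernel_prodMk_left
        (Kernel.measurableSet_mutuallySingularSet κ η).compl
    · refine Filter.Eventually.of_forall fun a => ?_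
      have h : Prod.mk a ⁻¹' (Kernel.mutuallySingularSet κ η)ᶜ
          = (Kernel.mutuallySingularSetSlice κ η a)ᶜ := rfl
      show (Kernel.singularPart κ η a) _ = (0 : α → ℝ≥0∞) a
      rw [h, Pi.zero_apply]
      exact Kernel.singularPart_compl_mutuallySingularSetSlice κ η a
  · rw [compl_compl, Measure.compProd_apply (Kernel.measurableSet_mutuallySingularSet κ η)]
    refine lintegral_eq_zero_iff ?_ |>.mpr ?_
    · exact Kernel.measurable_kernel_prodMk_left
        (Kernel.measurableSet_mutuallySingularSet κ η)
    · refine Filter.Eventually.of_forall fun a => ?_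
      have h : Prod.mk a ⁻¹' (Kernel.mutuallySingularSet κ η)
          = Kernel.mutuallySingularSetSlice κ η a := rfl
      show (η a) _ = (0 : α → ℝ≥0∞) a
      rw [h, Pi.zero_apply]
      exact Kernel.measure_mutuallySingularSetSlice κ η a

lemma ActionAux.compProd_eq_add :
    T ⊗ₘ κ = (T ⊗ₘ η).withDensity (fun p => Kernel.rnDeriv κ η p.1 p.2)
      + T ⊗ₘ Kernel.singularPart κ η := by
  conv_lhs => rw [← Kernel.rnDeriv_add_singularPart κ η]
  rw [Measure.compProd_add_right, ActionAux.compProd_withDensity_rnDeriv]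

lemma ActionAux.singularPart_compProd_eq :
    (T ⊗ₘ κ).singularPart (T ⊗ₘ η) = T ⊗ₘ Kernel.singularPart κ η :=
  ((T ⊗ₘ κ).eq_singularPart (Kernel.measurable_rnDeriv κ η)
    (ActionAux.compProd_singularPart_mutuallySingular T κ η)
    (by rw [add_comm, ← ActionAux.compProd_eq_add])).symm

lemma ActionAux.rnDeriv_compProd_eq [SigmaFinite T] :
    (fun p => Kernel.rnDeriv κ η p.1 p.2) =ᵐ[T ⊗ₘ η] (T ⊗ₘ κ).rnDeriv (T ⊗ₘ η) := by
  have := ActionAux.compProd_sigmaFinite T η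
  exact (T ⊗ₘ κ).eq_rnDeriv₀ (Kernel.measurable_rnDeriv κ η).aemeasurable
    (ActionAux.compProd_singularPart_mutuallySingular T κ η)
    (by rw [add_comm, ← ActionAux.compProd_eq_add])

end CompProdDecomp

section Smul

variable {β : Type*} [MeasurableSpace β]

lemma ActionAux.smul_ac_iff {a b : Measure β} {c : ℝ≥0∞} (hc0 : c ≠ 0) (hct : c ≠ ⊤) :
    (c • a) ≪ (c • b) ↔ a ≪ b := by
  constructor <;> intro h s hs
  · have h2 : (c • b) s = 0 := by simp [Measure.smul_apply, hs]
    have := h h2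
    simpa [Measure.smul_apply, hc0, hct] using this
  · have hbs : b s = 0 := by simpa [Measure.smul_apply, hc0, hct] using hs
    simp [Measure.smul_apply, h hbs]

lemma ActionAux.rnDeriv_smul_smul (a b : Measure β) [IsFiniteMeasure a] [IsFiniteMeasure b]
    {c : ℝ≥0∞} (hc0 : c ≠ 0) (hct : c ≠ ⊤) :
    (c • a).rnDeriv (c • b) =ᵐ[b] a.rnDeriv b := by
  have hfin : IsFiniteMeasure (c • b) := by
    refine ⟨?_⟩
    rw [Measure.smul_apply, smul_eq_mul]
    exact ENNReal.mul_lt_top hct.lt_top (measure_lt_top b univ)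
  have h1 : (c • a).rnDeriv (c • b) =ᵐ[c • b] c • a.rnDeriv (c • b) :=
    Measure.rnDeriv_smul_left_of_ne_top a (c • b) hct
  rw [Measure.ae_ennreal_smul_measure_eq hc0] at h1
  have h2 : a.rnDeriv (c • b) =ᵐ[b] c⁻¹ • a.rnDeriv b :=
    Measure.rnDeriv_smul_right_of_ne_top a b hc0 hct
  filter_upwards [h1, h2] with x hx1 hx2
  rw [hx1, Pi.smul_apply, hx2, Pi.smul_apply, smul_eq_mul, smul_eq_mul, ← mul_assoc,
    ENNReal.mul_inv_cancel hc0 hct, one_mul]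

lemma ActionAux.singularPart_smul_smul (a b : Measure β) {c : ℝ≥0∞}
    (hc0 : c ≠ 0) (hct : c ≠ ⊤) :
    (c • a).singularPart (c • b) = c • a.singularPart b := by
  have hc : c = ((c.toNNReal : ℝ≥0) : ℝ≥0∞) := (ENNReal.coe_toNNReal hct).symm
  have hc0' : c.toNNReal ≠ 0 := by
    simp [ENNReal.toNNReal_eq_zero_iff, hc0, hct]
  have hsm : ∀ m : Measure β, ((c.toNNReal : ℝ≥0∞)) • m = c.toNNReal • m := fun m => by
    ext s hs
    simp [Measure.smul_apply]
  rw [hc, hsm, hsm, hsm, Measure.singularPart_smul_right _ _ _ hc0',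
    Measure.singularPart_smul]

end Smul

section FamKernel

/-- The kernel `t ↦ (g t)⁻¹ • m t` associated to a measurable family of measures,
normalized by a measurable weight `g`. -/
noncomputable def ActionAux.famKernel (g : α → ℝ≥0∞) (hg : Measurable g)
    (m : α → Measure γ) (hm : ∀ A, MeasurableSet A → Measurable fun t => m t A) :
    Kernel α γ where
  toFun := fun t => (g t)⁻¹ • m t
  measurable' := Measure.measurable_of_measurable_coe _ (fun A hA => by
    simp_rw [Measure.smul_apply, smul_eq_mul]
    exact hg.inv.mul (hm A hA))

lemma ActionAux.famKernel_apply (g : α → ℝ≥0∞) (hg : Measurable g)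
    (m : α → Measure γ) (hm : ∀ A, MeasurableSet A → Measurable fun t => m t A) (t : α) :
    ActionAux.famKernel g hg m hm t = (g t)⁻¹ • m t := rfl

lemma ActionAux.isFiniteKernel_famKernel (g : α → ℝ≥0∞) (hg : Measurable g)
    (m : α → Measure γ) (hm : ∀ A, MeasurableSet A → Measurable fun t => m t A)
    (C : ℝ≥0∞) (hC : C < ⊤) (hle : ∀ t, (g t)⁻¹ * m t univ ≤ C) :
    IsFiniteKernel (ActionAux.famKernel g hg m hm) := by
  refine ⟨⟨C, hC, fun t => ?_⟩⟩
  rw [ActionAux.famKernel_apply, Measure.smul_apply, smul_eq_mul]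
  exact hle t

/-- The time-disintegrated measure as a composition-product. -/
lemma ActionAux.timeDisintegration_eq_compProd {d : ℕ} (g : ℝ → ℝ≥0∞) (hg : Measurable g)
    (hg0 : ∀ t, g t ≠ 0) (hgt : ∀ t, g t ≠ ⊤)
    (m : ℝ → Measure (EuclideanSpace ℝ (Fin d)))
    (hm : ∀ A, MeasurableSet A → Measurable fun t => m t A)
    [IsSFiniteKernel (ActionAux.famKernel g hg m hm)] :
    timeDisintegration m
      = ((volume.restrict (Set.Icc (0:ℝ) 1)).withDensity g) ⊗ₘ ActionAux.famKernel g hg m hm := by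
  have hslice : ∀ s : Set (ℝ × EuclideanSpace ℝ (Fin d)), MeasurableSet s →
      Measurable (fun t => m t (Prod.mk t ⁻¹' s)) := by
    intro s hs
    have h : (fun t => m t (Prod.mk t ⁻¹' s))
        = fun t => g t * (ActionAux.famKernel g hg m hm t (Prod.mk t ⁻¹' s)) := by
      funext t
      rw [ActionAux.famKernel_apply, Measure.smul_apply, smul_eq_mul, ← mul_assoc,
        ENNReal.mul_inv_cancel (hg0 t) (hgt t), one_mul]
    rw [h]
    exact hg.mul (Kernel.measurable_kernel_prodMk_left hs)
  have hmapmeas : Measurable (fun t => (m t).map (Prod.mk t)) := by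
    refine Measure.measurable_of_measurable_coe _ (fun A hA => ?_)
    simp_rw [Measure.map_apply measurable_prodMk_left hA]
    exact hslice A hA
  ext A hA
  rw [timeDisintegration, Measure.bind_apply hA hmapmeas.aemeasurable, Measure.compProd_apply hA,
    lintegral_withDensity_eq_lintegral_mul _ hg (Kernel.measurable_kernel_prodMk_left hA)]
  refine lintegral_congr fun t => ?_
  rw [Measure.map_apply measurable_prodMk_left hA, Pi.mul_apply, ActionAux.famKernel_apply,
    Measure.smul_apply, smul_eq_mul, ← mul_assoc, ENNReal.mul_inv_cancel (hg0 t) (hgt t), one_mul]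

end FamKernel

lemma ActionAux.measurable_bbPhi {d : ℕ} :
    Measurable (fun q : ℝ × EuclideanSpace ℝ (Fin d) => bbPhi q.1 q.2) := by
  unfold bbPhi
  refine Measurable.ite (measurableSet_lt measurable_const measurable_fst) ?_ ?_
  · exact ((measurable_norm.comp measurable_snd).pow_const 2 |>.div measurable_fst).ennreal_ofReal
  · exact Measurable.ite (measurable_snd (measurableSet_singleton 0)) measurable_const
      measurable_const

set_option maxHeartbeats 2000000 in
theorem ActionAux.main {d : ℕ}
    (D : Set (EuclideanSpace ℝ (Fin d))) (hDbdd : Bornology.IsBounded D) (δ : ℝ) (hδ : 0 < δ)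
    (μ σ ρ : ℝ → Measure (EuclideanSpace ℝ (Fin d)))
    (w : ℝ → EuclideanSpace ℝ (Fin d) → EuclideanSpace ℝ (Fin d))
    (s : ℝ → EuclideanSpace ℝ (Fin d) → ℝ)
    (hμfin : ∀ t, IsFiniteMeasure (μ t)) (hσfin : ∀ t, IsFiniteMeasure (σ t))
    (hρfin : ∀ t, IsFiniteMeasure (ρ t))
    (hμmeas : ∀ A : Set (EuclideanSpace ℝ (Fin d)), MeasurableSet A →
      Measurable fun t => μ t A)
    (hσmeas : ∀ A : Set (EuclideanSpace ℝ (Fin d)), MeasurableSet A →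
      Measurable fun t => σ t A)
    (hρmeas : ∀ A : Set (EuclideanSpace ℝ (Fin d)), MeasurableSet A →
      Measurable fun t => ρ t A)
    (hwmeas : Measurable fun p : ℝ × EuclideanSpace ℝ (Fin d) => w p.1 p.2)
    (hsmeas : Measurable fun p : ℝ × EuclideanSpace ℝ (Fin d) => s p.1 p.2) :
    (∫⁻ t in Set.Icc (0:ℝ) 1,
        Dact δ (volume.restrict D) (μ t) (σ t) (w t) (ρ t) (s t))
      = Dact δ ((volume : Measure (ℝ × EuclideanSpace ℝ (Fin d))).restrict
            (Set.Icc (0:ℝ) 1 ×ˢ D))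
          (timeDisintegration μ) (timeDisintegration σ)
          (fun p => w p.1 p.2) (timeDisintegration ρ) (fun p => s p.1 p.2) := by
  classical
  set L : Measure (EuclideanSpace ℝ (Fin d)) := volume.restrict D with hLdef
  set T : Measure ℝ := volume.restrict (Icc (0:ℝ) 1) with hTdef
  haveI hLfin : IsFiniteMeasure L := ⟨by
    rw [hLdef, Measure.restrict_apply_univ]; exact hDbdd.measure_lt_top⟩
  haveI hTfin : IsFiniteMeasure T := ⟨by
    rw [hTdef, Measure.restrict_apply_univ, Real.volume_Icc]; exact ENNReal.ofReal_lt_top⟩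
  -- the weight function
  set g : ℝ → ℝ≥0∞ := fun t => (1 + L univ) + (μ t univ + σ t univ + ρ t univ) with hgdef
  have hgmeas : Measurable g :=
    measurable_const.add (((hμmeas univ MeasurableSet.univ).add
      (hσmeas univ MeasurableSet.univ)).add (hρmeas univ MeasurableSet.univ))
  have hg1 : ∀ t, (1 : ℝ≥0∞) ≤ g t := fun t => le_trans le_self_add le_self_add
  have hg0 : ∀ t, g t ≠ 0 := fun t => fun h => by simpa using (hg1 t).trans_eq h
  have hgt : ∀ t, g t ≠ ⊤ := fun t => by
    haveI := hμfin t; haveI := hσfin t; haveI := hρfin t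
    simp only [hgdef]
    exact ENNReal.add_ne_top.mpr ⟨ENNReal.add_ne_top.mpr ⟨ENNReal.one_ne_top, measure_ne_top L _⟩,
      ENNReal.add_ne_top.mpr ⟨ENNReal.add_ne_top.mpr ⟨measure_ne_top _ _, measure_ne_top _ _⟩,
        measure_ne_top _ _⟩⟩
  have hginv0 : ∀ t, (g t)⁻¹ ≠ 0 := fun t => ENNReal.inv_ne_zero.mpr (hgt t)
  have hginvt : ∀ t, (g t)⁻¹ ≠ ⊤ := fun t => ENNReal.inv_ne_top.mpr (hg0 t)
  have hbound : ∀ (m : ℝ → Measure (EuclideanSpace ℝ (Fin d))),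
      (∀ t, m t univ ≤ g t) → ∀ t, (g t)⁻¹ * m t univ ≤ 1 := fun m hm t =>
    le_of_le_of_eq (mul_le_mul_right (hm t) _) (ENNReal.inv_mul_cancel (hg0 t) (hgt t))
  have hleμ : ∀ t, μ t univ ≤ g t := fun t => le_add_left (le_add_right le_self_add)
  have hleσ : ∀ t, σ t univ ≤ g t := fun t => le_add_left (le_add_right le_add_self)
  have hleρ : ∀ t, ρ t univ ≤ g t := fun t => le_add_left le_add_self
  -- the normalized kernels
  obtain ⟨κμ, hκμfin, hκμt⟩ : ∃ κ : Kernel ℝ (EuclideanSpace ℝ (Fin d)),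
      IsFiniteKernel κ ∧ ∀ t, κ t = (g t)⁻¹ • μ t :=
    ⟨ActionAux.famKernel g hgmeas μ hμmeas,
      ActionAux.isFiniteKernel_famKernel _ _ _ _ 1 ENNReal.one_lt_top (hbound μ hleμ),
      fun t => rfl⟩
  obtain ⟨κσ, hκσfin, hκσt⟩ : ∃ κ : Kernel ℝ (EuclideanSpace ℝ (Fin d)),
      IsFiniteKernel κ ∧ ∀ t, κ t = (g t)⁻¹ • σ t :=
    ⟨ActionAux.famKernel g hgmeas σ hσmeas,
      ActionAux.isFiniteKernel_famKernel _ _ _ _ 1 ENNReal.one_lt_top (hbound σ hleσ),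
      fun t => rfl⟩
  obtain ⟨κρ, hκρfin, hκρt⟩ : ∃ κ : Kernel ℝ (EuclideanSpace ℝ (Fin d)),
      IsFiniteKernel κ ∧ ∀ t, κ t = (g t)⁻¹ • ρ t :=
    ⟨ActionAux.famKernel g hgmeas ρ hρmeas,
      ActionAux.isFiniteKernel_famKernel _ _ _ _ 1 ENNReal.one_lt_top (hbound ρ hleρ),
      fun t => rfl⟩
  obtain ⟨κL, hκLfin, hκLt⟩ : ∃ κ : Kernel ℝ (EuclideanSpace ℝ (Fin d)),
      IsFiniteKernel κ ∧ ∀ t, κ t = (g t)⁻¹ • L :=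
    ⟨ActionAux.famKernel g hgmeas (fun _ => L) (fun A hA => measurable_const),
      ActionAux.isFiniteKernel_famKernel _ _ _ _ (L univ) (measure_lt_top L univ)
        (fun t => by
          calc (g t)⁻¹ * L univ ≤ 1 * L univ :=
                mul_le_mul_left (ENNReal.inv_le_one.mpr (hg1 t)) _
            _ = L univ := one_mul _),
      fun t => rfl⟩
  haveI := hκμfin; haveI := hκσfin; haveI := hκρfin; haveI := hκLfin
  -- the reweighted time measure
  set T' : Measure ℝ := T.withDensity g with hT'def
  haveI hT'sf : SigmaFinite T' :=
    SigmaFinite.withDensity_of_ne_top (Filter.Eventually.of_forall hgt)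
  have hwd : ∀ F : ℝ → ℝ≥0∞, Measurable F → ∫⁻ t, g t * F t ∂T = ∫⁻ t, F t ∂T' := by
    intro F hF
    rw [hT'def, lintegral_withDensity_eq_lintegral_mul T hgmeas hF]
    exact lintegral_congr fun t => rfl
  -- identification of the space-time measures with composition products
  have hcomp : ∀ (m : ℝ → Measure (EuclideanSpace ℝ (Fin d)))
      (hm : ∀ A, MeasurableSet A → Measurable fun t => m t A)
      (κ : Kernel ℝ (EuclideanSpace ℝ (Fin d))) (_ : IsFiniteKernel κ)
      (hκ : ∀ t, κ t = (g t)⁻¹ • m t),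
      timeDisintegration m = T' ⊗ₘ κ := by
    intro m hm κ hκfin hκ
    haveI := hκfin
    have hmval : ∀ t (A : Set (ℝ × EuclideanSpace ℝ (Fin d))),
        m t (Prod.mk t ⁻¹' A) = g t * κ t (Prod.mk t ⁻¹' A) := by
      intro t A
      rw [hκ t, Measure.smul_apply, smul_eq_mul, ← mul_assoc,
        ENNReal.mul_inv_cancel (hg0 t) (hgt t), one_mul]
    have hmapmeas : Measurable (fun t => (m t).map (Prod.mk t)) := by
      refine Measure.measurable_of_measurable_coe _ (fun A hA => ?_)
      simp_rw [Measure.map_apply measurable_prodMk_left hA]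
      simp_rw [fun t => hmval t A]
      exact hgmeas.mul (Kernel.measurable_kernel_prodMk_left hA)
    ext A hA
    rw [timeDisintegration, Measure.bind_apply hA hmapmeas.aemeasurable, Measure.compProd_apply hA, hT'def,
      lintegral_withDensity_eq_lintegral_mul T hgmeas (Kernel.measurable_kernel_prodMk_left hA)]
    refine lintegral_congr fun t => ?_
    rw [Measure.map_apply measurable_prodMk_left hA, hmval t A, Pi.mul_apply]
  have hμc : timeDisintegration μ = T' ⊗ₘ κμ := hcomp μ hμmeas κμ hκμfin hκμt
  have hσc : timeDisintegration σ = T' ⊗ₘ κσ := hcomp σ hσmeas κσ hκσfin hκσt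
  have hρc : timeDisintegration ρ = T' ⊗ₘ κρ := hcomp ρ hρmeas κρ hκρfin hκρt
  have hLc : (volume : Measure (ℝ × EuclideanSpace ℝ (Fin d))).restrict
      (Icc (0:ℝ) 1 ×ˢ D) = T' ⊗ₘ κL := by
    have h1 : (volume : Measure (ℝ × EuclideanSpace ℝ (Fin d))).restrict
        (Icc (0:ℝ) 1 ×ˢ D) = T.prod L := by
      rw [Measure.volume_eq_prod, ← Measure.prod_restrict]
    rw [h1]
    ext A hA
    rw [Measure.prod_apply hA, Measure.compProd_apply hA, hT'def,
      lintegral_withDensity_eq_lintegral_mul T hgmeas (Kernel.measurable_kernel_prodMk_left hA)]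
    refine lintegral_congr fun t => ?_
    rw [Pi.mul_apply, hκLt t, Measure.smul_apply, smul_eq_mul, ← mul_assoc,
      ENNReal.mul_inv_cancel (hg0 t) (hgt t), one_mul]
  -- singular-part kernels
  set sμ : Kernel ℝ (EuclideanSpace ℝ (Fin d)) := Kernel.singularPart κμ κL with hsμdef
  set sσ : Kernel ℝ (EuclideanSpace ℝ (Fin d)) := Kernel.singularPart κσ κL with hsσdef
  set sρ : Kernel ℝ (EuclideanSpace ℝ (Fin d)) := Kernel.singularPart κρ κL with hsρdef
  haveI hsμfin : IsFiniteKernel sμ := by rw [hsμdef]; infer_instance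
  haveI hsσfin : IsFiniteKernel sσ := by rw [hsσdef]; infer_instance
  haveI hsρfin : IsFiniteKernel sρ := by rw [hsρdef]; infer_instance
  -- pointwise identification of kernel Radon-Nikodym derivatives and singular parts
  have hkerRD : ∀ (m : ℝ → Measure (EuclideanSpace ℝ (Fin d)))
      (_ : ∀ t, IsFiniteMeasure (m t))
      (κ : Kernel ℝ (EuclideanSpace ℝ (Fin d))) (_ : IsFiniteKernel κ)
      (hκ : ∀ t, κ t = (g t)⁻¹ • m t) (t : ℝ),
      Kernel.rnDeriv κ κL t =ᵐ[L] (m t).rnDeriv L := by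
    intro m hmfin κ hκfin hκ t
    haveI := hκfin; haveI := hmfin t
    have h1 : Kernel.rnDeriv κ κL t =ᵐ[κL t] (κ t).rnDeriv (κL t) :=
      Kernel.rnDeriv_eq_rnDeriv_measure
    rw [hκLt t, Measure.ae_ennreal_smul_measure_eq (hginv0 t)] at h1
    have h2 : ((g t)⁻¹ • m t).rnDeriv ((g t)⁻¹ • L) =ᵐ[L] (m t).rnDeriv L :=
      ActionAux.rnDeriv_smul_smul (m t) L (hginv0 t) (hginvt t)
    filter_upwards [h1, h2] with x hx1 hx2
    rw [hx1, hκ t]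
    exact hx2
  have hkerSP : ∀ (m : ℝ → Measure (EuclideanSpace ℝ (Fin d)))
      (κ : Kernel ℝ (EuclideanSpace ℝ (Fin d))) (_ : IsFiniteKernel κ)
      (hκ : ∀ t, κ t = (g t)⁻¹ • m t) (t : ℝ),
      Kernel.singularPart κ κL t = (g t)⁻¹ • (m t).singularPart L := by
    intro m κ hκfin hκ t
    haveI := hκfin
    rw [Kernel.singularPart_eq_singularPart_measure, hκ t, hκLt t]
    exact ActionAux.singularPart_smul_smul (m t) L (hginv0 t) (hginvt t)
  -- the space-time Radon-Nikodym facts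
  have hRDμ := ActionAux.rnDeriv_compProd_eq T' κμ κL
  have hRDσ := ActionAux.rnDeriv_compProd_eq T' κσ κL
  have hRDρ := ActionAux.rnDeriv_compProd_eq T' κρ κL
  have hSPμ : (T' ⊗ₘ κμ).singularPart (T' ⊗ₘ κL) = T' ⊗ₘ sμ := by
    rw [hsμdef]; exact ActionAux.singularPart_compProd_eq T' κμ κL
  have hSPσ : (T' ⊗ₘ κσ).singularPart (T' ⊗ₘ κL) = T' ⊗ₘ sσ := by
    rw [hsσdef]; exact ActionAux.singularPart_compProd_eq T' κσ κL
  have hSPρ : (T' ⊗ₘ κρ).singularPart (T' ⊗ₘ κL) = T' ⊗ₘ sρ := by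
    rw [hsρdef]; exact ActionAux.singularPart_compProd_eq T' κρ κL
  have hRD2μ := ActionAux.rnDeriv_compProd_eq T' sμ (sμ + sσ)
  have hRD2σ := ActionAux.rnDeriv_compProd_eq T' sσ (sμ + sσ)
  -- the integrands
  set Φ₁ : ℝ × EuclideanSpace ℝ (Fin d) → ℝ≥0∞ := fun p =>
    bbPhi ((Kernel.rnDeriv κμ κL p.1 p.2).toReal)
      (((Kernel.rnDeriv κσ κL p.1 p.2).toReal) • w p.1 p.2) with hΦ₁def
  have hΦ₁ : Measurable Φ₁ := ActionAux.measurable_bbPhi.comp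
    ((Kernel.measurable_rnDeriv κμ κL).ennreal_toReal.prodMk
      (((Kernel.measurable_rnDeriv κσ κL).ennreal_toReal).smul hwmeas))
  set Φ₂ : ℝ × EuclideanSpace ℝ (Fin d) → ℝ≥0∞ := fun p =>
    bbPhi ((Kernel.rnDeriv sμ (sμ + sσ) p.1 p.2).toReal)
      (((Kernel.rnDeriv sσ (sμ + sσ) p.1 p.2).toReal) • w p.1 p.2) with hΦ₂def
  have hΦ₂ : Measurable Φ₂ := ActionAux.measurable_bbPhi.comp
    ((Kernel.measurable_rnDeriv sμ (sμ + sσ)).ennreal_toReal.prodMk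
      (((Kernel.measurable_rnDeriv sσ (sμ + sσ)).ennreal_toReal).smul hwmeas))
  set Φ₃ : ℝ × EuclideanSpace ℝ (Fin d) → ℝ≥0∞ := fun p =>
    ENNReal.ofReal (((Kernel.rnDeriv κρ κL p.1 p.2).toReal * s p.1 p.2) ^ 2) with hΦ₃def
  have hΦ₃ : Measurable Φ₃ :=
    (((Kernel.measurable_rnDeriv κρ κL).ennreal_toReal.mul hsmeas).pow_const 2).ennreal_ofReal
  set F₁ : ℝ → ℝ≥0∞ := fun t => ∫⁻ x, Φ₁ (t, x) ∂(κL t) with hF₁def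
  have hF₁ : Measurable F₁ := by
    exact Measurable.lintegral_kernel_prod_right
      (hΦ₁.comp (measurable_fst.prodMk measurable_snd))
  set F₂ : ℝ → ℝ≥0∞ := fun t => ∫⁻ x, Φ₂ (t, x) ∂((sμ + sσ) t) with hF₂def
  have hF₂ : Measurable F₂ := by
    exact Measurable.lintegral_kernel_prod_right
      (hΦ₂.comp (measurable_fst.prodMk measurable_snd))
  set F₃ : ℝ → ℝ≥0∞ := fun t => ∫⁻ x, Φ₃ (t, x) ∂(κL t) with hF₃def
  have hF₃ : Measurable F₃ := by
    exact Measurable.lintegral_kernel_prod_right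
      (hΦ₃.comp (measurable_fst.prodMk measurable_snd))
  -- the space-time Benamou-Brenier action
  have hAbbRHS : Abb ((volume : Measure (ℝ × EuclideanSpace ℝ (Fin d))).restrict
        (Icc (0:ℝ) 1 ×ˢ D)) (timeDisintegration μ) (timeDisintegration σ)
        (fun p => w p.1 p.2)
      = (∫⁻ t, F₁ t ∂T') + ∫⁻ t, F₂ t ∂T' := by
    rw [Abb, hμc, hσc, hLc, hSPμ, hSPσ, ← Measure.compProd_add_right]
    congr 1
    · rw [show (∫⁻ t, F₁ t ∂T') = ∫⁻ p, Φ₁ p ∂(T' ⊗ₘ κL) from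
        (Measure.lintegral_compProd hΦ₁).symm]
      refine lintegral_congr_ae ?_
      filter_upwards [hRDμ, hRDσ] with p h1 h2
      simp only [hΦ₁def]
      rw [← h1, ← h2]
    · rw [show (∫⁻ t, F₂ t ∂T') = ∫⁻ p, Φ₂ p ∂(T' ⊗ₘ (sμ + sσ)) from
        (Measure.lintegral_compProd hΦ₂).symm]
      refine lintegral_congr_ae ?_
      filter_upwards [hRD2μ, hRD2σ] with p h1 h2
      simp only [hΦ₂def]
      rw [← h1, ← h2]
  -- the bad set for absolute continuity
  set N : Set ℝ := {t | ¬ ρ t ≪ L} with hNdef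
  have hNiff : ∀ t, κρ t ≪ κL t ↔ ρ t ≪ L := fun t => by
    rw [hκρt t, hκLt t]
    exact ActionAux.smul_ac_iff (hginv0 t) (hginvt t)
  have hNmeas : MeasurableSet N := by
    have : N = {t | κρ t ≪ κL t}ᶜ := by
      ext t; simp [hNdef, hNiff t]
    rw [this]
    exact (Kernel.measurableSet_absolutelyContinuous κρ κL).compl
  have hsρzero : ∀ t, t ∉ N → sρ t = 0 := by
    intro t ht
    rw [hsρdef]
    refine (Kernel.singularPart_eq_zero_iff_absolutelyContinuous κρ κL t).mpr ?_
    exact (hNiff t).mpr (by simpa [hNdef] using ht)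
  -- absolute continuity of the space-time measures
  have hACiff : timeDisintegration ρ ≪ (volume : Measure (ℝ × EuclideanSpace ℝ (Fin d))).restrict
      (Icc (0:ℝ) 1 ×ˢ D) ↔ T' N = 0 := by
    rw [hρc, hLc]
    constructor
    · intro h
      have h0 : T' ⊗ₘ sρ = 0 := by
        rw [← hSPρ]
        exact Measure.singularPart_eq_zero_of_ac h
      have h1 : ∫⁻ t, sρ t univ ∂T' = 0 := by
        have h2 := congrArg (fun m : Measure (ℝ × EuclideanSpace ℝ (Fin d)) => m univ) h0
        simpa [Measure.compProd_apply MeasurableSet.univ] using h2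
      have h2 : ∀ᵐ t ∂T', sρ t univ = 0 :=
        (lintegral_eq_zero_iff (Kernel.measurable_coe sρ MeasurableSet.univ)).mp h1
      refine measure_eq_zero_iff_ae_notMem.mpr ?_
      filter_upwards [h2] with t ht htN
      have hz : sρ t = 0 := Measure.measure_univ_eq_zero.mp ht
      rw [hsρdef] at hz
      have hac : κρ t ≪ κL t :=
        (Kernel.singularPart_eq_zero_iff_absolutelyContinuous κρ κL t).mp hz
      exact htN ((hNiff t).mp hac)
    · intro h
      have hz : T' ⊗ₘ sρ = 0 := by
        rw [← Measure.measure_univ_eq_zero, Measure.compProd_apply MeasurableSet.univ]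
        rw [lintegral_eq_zero_iff (Kernel.measurable_kernel_prodMk_left MeasurableSet.univ)]
        refine Filter.Eventually.mono (measure_eq_zero_iff_ae_notMem.mp h) fun t ht => ?_
        show sρ t (Prod.mk t ⁻¹' univ) = (0 : ℝ → ℝ≥0∞) t
        rw [hsρzero t ht]
        simp only [Measure.coe_zero, Pi.zero_apply]
      rw [ActionAux.compProd_eq_add T' κρ κL, ← hsρdef, hz, add_zero]
      exact withDensity_absolutelyContinuous _ _
  -- relation between null sets of T and T'
  have hTT' : T N = 0 ↔ T' N = 0 := by
    constructor
    · intro h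
      exact withDensity_absolutelyContinuous T g h
    · intro h
      rw [hT'def, withDensity_apply g hNmeas] at h
      have h2 : ∀ᵐ t ∂T, t ∈ N → g t = 0 :=
        (ae_restrict_iff' hNmeas).mp ((lintegral_eq_zero_iff hgmeas).mp h)
      refine measure_eq_zero_iff_ae_notMem.mpr ?_
      filter_upwards [h2] with t ht htN
      exact hg0 t (ht htN)
  -- slice identity for the Benamou-Brenier part
  have hsliceAbb : ∀ t, Abb L (μ t) (σ t) (w t) = g t * (F₁ t + F₂ t) := by
    intro t
    haveI := hμfin t; haveI := hσfin t
    have e₁ : g t * F₁ t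
        = ∫⁻ x, bbPhi (((μ t).rnDeriv L x).toReal)
            ((((σ t).rnDeriv L x).toReal) • w t x) ∂L := by
      have h0 : F₁ t = (g t)⁻¹ * ∫⁻ x, Φ₁ (t, x) ∂L := by
        rw [hF₁def]
        simp only []
        rw [hκLt t, lintegral_smul_measure, smul_eq_mul]
      rw [h0, ← mul_assoc, ENNReal.mul_inv_cancel (hg0 t) (hgt t), one_mul]
      refine lintegral_congr_ae ?_
      filter_upwards [hkerRD μ hμfin κμ hκμfin hκμt t, hkerRD σ hσfin κσ hκσfin hκσt t]
        with x h1 h2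
      simp only [hΦ₁def]
      rw [h1, h2]
    have href : (sμ + sσ) t
        = (g t)⁻¹ • ((μ t).singularPart L + (σ t).singularPart L) := by
      rw [Kernel.add_apply, hsμdef, hsσdef, hkerSP μ κμ hκμfin hκμt t,
        hkerSP σ κσ hκσfin hκσt t, smul_add]
    have e₂ : g t * F₂ t
        = ∫⁻ x, bbPhi ((((μ t).singularPart L).rnDeriv
              ((μ t).singularPart L + (σ t).singularPart L) x).toReal)
            (((((σ t).singularPart L).rnDeriv
              ((μ t).singularPart L + (σ t).singularPart L) x).toReal) • w t x)
            ∂((μ t).singularPart L + (σ t).singularPart L) := by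
      have h0 : F₂ t = (g t)⁻¹ * ∫⁻ x, Φ₂ (t, x)
          ∂((μ t).singularPart L + (σ t).singularPart L) := by
        rw [hF₂def]
        simp only []
        rw [href, lintegral_smul_measure, smul_eq_mul]
      rw [h0, ← mul_assoc, ENNReal.mul_inv_cancel (hg0 t) (hgt t), one_mul]
      refine lintegral_congr_ae ?_
      have hRDa : Kernel.rnDeriv sμ (sμ + sσ) t
          =ᵐ[(μ t).singularPart L + (σ t).singularPart L]
          ((g t)⁻¹ • (μ t).singularPart L).rnDeriv
            ((g t)⁻¹ • ((μ t).singularPart L + (σ t).singularPart L)) := by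
        have h1 : Kernel.rnDeriv sμ (sμ + sσ) t =ᵐ[(sμ + sσ) t]
            (sμ t).rnDeriv ((sμ + sσ) t) := Kernel.rnDeriv_eq_rnDeriv_measure
        rw [href, Measure.ae_ennreal_smul_measure_eq (hginv0 t)] at h1
        have h3 : sμ t = (g t)⁻¹ • (μ t).singularPart L := by
          rw [hsμdef]; exact hkerSP μ κμ hκμfin hκμt t
        filter_upwards [h1] with x hx
        rw [hx, h3]
      have hRDb : Kernel.rnDeriv sσ (sμ + sσ) t
          =ᵐ[(μ t).singularPart L + (σ t).singularPart L]
          ((g t)⁻¹ • (σ t).singularPart L).rnDeriv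
            ((g t)⁻¹ • ((μ t).singularPart L + (σ t).singularPart L)) := by
        have h1 : Kernel.rnDeriv sσ (sμ + sσ) t =ᵐ[(sμ + sσ) t]
            (sσ t).rnDeriv ((sμ + sσ) t) := Kernel.rnDeriv_eq_rnDeriv_measure
        rw [href, Measure.ae_ennreal_smul_measure_eq (hginv0 t)] at h1
        have h3 : sσ t = (g t)⁻¹ • (σ t).singularPart L := by
          rw [hsσdef]; exact hkerSP σ κσ hκσfin hκσt t
        filter_upwards [h1] with x hx
        rw [hx, h3]
      have hcμ : ((g t)⁻¹ • (μ t).singularPart L).rnDeriv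
            ((g t)⁻¹ • ((μ t).singularPart L + (σ t).singularPart L))
          =ᵐ[(μ t).singularPart L + (σ t).singularPart L]
          ((μ t).singularPart L).rnDeriv ((μ t).singularPart L + (σ t).singularPart L) :=
        ActionAux.rnDeriv_smul_smul _ _ (hginv0 t) (hginvt t)
      have hcσ : ((g t)⁻¹ • (σ t).singularPart L).rnDeriv
            ((g t)⁻¹ • ((μ t).singularPart L + (σ t).singularPart L))
          =ᵐ[(μ t).singularPart L + (σ t).singularPart L]
          ((σ t).singularPart L).rnDeriv ((μ t).singularPart L + (σ t).singularPart L) :=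
        ActionAux.rnDeriv_smul_smul _ _ (hginv0 t) (hginvt t)
      filter_upwards [hRDa, hRDb, hcμ, hcσ] with x h1 h2 h3 h4
      simp only [hΦ₂def]
      rw [h1, h2, h3, h4]
    rw [Abb, mul_add, e₁, e₂]
  -- slice identity for the source part, on the good set
  have hsliceAz : ∀ t, t ∉ N → Az L (ρ t) (s t) = g t * F₃ t := by
    intro t ht
    haveI := hρfin t
    have hac : ρ t ≪ L := by simpa [hNdef] using ht
    rw [Az, if_pos hac]
    have h0 : F₃ t = (g t)⁻¹ * ∫⁻ x, Φ₃ (t, x) ∂L := by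
      rw [hF₃def]
      simp only []
      rw [hκLt t, lintegral_smul_measure, smul_eq_mul]
    rw [h0, ← mul_assoc, ENNReal.mul_inv_cancel (hg0 t) (hgt t), one_mul]
    refine (lintegral_congr_ae ?_).symm
    filter_upwards [hkerRD ρ hρfin κρ hκρfin hκρt t] with x h1
    simp only [hΦ₃def]
    rw [h1]
  have hsliceAzTop : ∀ t, t ∈ N → Az L (ρ t) (s t) = ⊤ := by
    intro t ht
    rw [Az, if_neg (by simpa [hNdef] using ht)]
  have hcδ : ENNReal.ofReal (1 / δ) ≠ 0 :=
    ne_of_gt (ENNReal.ofReal_pos.mpr (by positivity))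
  -- final assembly
  by_cases hN : T N = 0
  · -- the absolutely continuous case
    have hAzRHS : Az ((volume : Measure (ℝ × EuclideanSpace ℝ (Fin d))).restrict
          (Icc (0:ℝ) 1 ×ˢ D)) (timeDisintegration ρ) (fun p => s p.1 p.2)
        = ∫⁻ t, F₃ t ∂T' := by
      rw [Az, if_pos (hACiff.mpr (hTT'.mp hN)), hρc, hLc]
      rw [show (∫⁻ t, F₃ t ∂T') = ∫⁻ p, Φ₃ p ∂(T' ⊗ₘ κL) from
        (Measure.lintegral_compProd hΦ₃).symm]
      refine lintegral_congr_ae ?_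
      filter_upwards [hRDρ] with p h1
      simp only [hΦ₃def]
      rw [← h1]
    calc (∫⁻ t, Dact δ L (μ t) (σ t) (w t) (ρ t) (s t) ∂T)
        = ∫⁻ t, (g t * F₁ t + g t * F₂ t + ENNReal.ofReal (1 / δ) * (g t * F₃ t)) ∂T := by
          refine lintegral_congr_ae ?_
          filter_upwards [measure_eq_zero_iff_ae_notMem.mp hN] with t ht
          rw [Dact, hsliceAbb t, hsliceAz t ht, mul_add]
      _ = (∫⁻ t, g t * F₁ t ∂T + ∫⁻ t, g t * F₂ t ∂T)
            + ENNReal.ofReal (1 / δ) * ∫⁻ t, g t * F₃ t ∂T := by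
          rw [lintegral_add_left (f := fun t => g t * F₁ t + g t * F₂ t) ((hgmeas.mul hF₁).add (hgmeas.mul hF₂)),
            lintegral_add_left (f := fun t => g t * F₁ t) (hgmeas.mul hF₁),
            lintegral_const_mul _ (f := fun t => g t * F₃ t) (hgmeas.mul hF₃)]
      _ = (∫⁻ t, F₁ t ∂T' + ∫⁻ t, F₂ t ∂T') + ENNReal.ofReal (1 / δ) * ∫⁻ t, F₃ t ∂T' := by
          rw [hwd F₁ hF₁, hwd F₂ hF₂, hwd F₃ hF₃]
      _ = _ := by rw [Dact, hAbbRHS, hAzRHS]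
  · -- the singular case: both sides are infinite
    have hRT : Dact δ ((volume : Measure (ℝ × EuclideanSpace ℝ (Fin d))).restrict
          (Icc (0:ℝ) 1 ×ˢ D)) (timeDisintegration μ) (timeDisintegration σ)
          (fun p => w p.1 p.2) (timeDisintegration ρ) (fun p => s p.1 p.2) = ⊤ := by
      rw [Dact, Az, if_neg (fun hac => hN (hTT'.mpr (hACiff.mp hac))),
        ENNReal.mul_top hcδ, add_top]
    rw [hRT]
    refine le_antisymm le_top ?_
    calc (⊤ : ℝ≥0∞) = ⊤ * T N := (ENNReal.top_mul hN).symm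
      _ = ∫⁻ _ in N, ⊤ ∂T := (setLIntegral_const N ⊤).symm
      _ ≤ ∫⁻ t in N, Dact δ L (μ t) (σ t) (w t) (ρ t) (s t) ∂T := by
          refine setLIntegral_mono' hNmeas fun t ht => ?_
          rw [Dact, hsliceAzTop t ht, ENNReal.mul_top hcδ, add_top]
      _ ≤ ∫⁻ t, Dact δ L (μ t) (σ t) (w t) (ρ t) (s t) ∂T :=
          lintegral_mono' Measure.restrict_le_self le_rfl


end ActionAux

/-- **Time-integrated action equals space-time action**:
`∫₀¹ D^D(μ_t,ν_t,ζ_t) dt = D^{[0,1]×D}(μ,ν,ζ)` for the disintegrated space-time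
measures `μ = ∫₀¹ δ_t ⊗ μ_t dt` etc. -/
theorem action_time_integral_eq_spacetime {d : ℕ}
    (D : Set (EuclideanSpace ℝ (Fin d))) (hDopen : IsOpen D)
    (hDbdd : Bornology.IsBounded D) (δ : ℝ) (hδ : 0 < δ)
    (μ σ ρ : ℝ → Measure (EuclideanSpace ℝ (Fin d)))
    (w : ℝ → EuclideanSpace ℝ (Fin d) → EuclideanSpace ℝ (Fin d))
    (s : ℝ → EuclideanSpace ℝ (Fin d) → ℝ)
    (hμfin : ∀ t, IsFiniteMeasure (μ t)) (hσfin : ∀ t, IsFiniteMeasure (σ t))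
    (hρfin : ∀ t, IsFiniteMeasure (ρ t))
    (hμmeas : ∀ A : Set (EuclideanSpace ℝ (Fin d)), MeasurableSet A →
      Measurable fun t => μ t A)
    (hσmeas : ∀ A : Set (EuclideanSpace ℝ (Fin d)), MeasurableSet A →
      Measurable fun t => σ t A)
    (hρmeas : ∀ A : Set (EuclideanSpace ℝ (Fin d)), MeasurableSet A →
      Measurable fun t => ρ t A)
    (hwmeas : Measurable fun p : ℝ × EuclideanSpace ℝ (Fin d) => w p.1 p.2)
    (hsmeas : Measurable fun p : ℝ × EuclideanSpace ℝ (Fin d) => s p.1 p.2)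
    (hw : ∀ t, ∀ᵐ x ∂ σ t, ‖w t x‖ = 1) (hs : ∀ t, ∀ᵐ x ∂ ρ t, |s t x| = 1)
    (hsupp : ∀ t, μ t (closure D)ᶜ = 0 ∧ σ t (closure D)ᶜ = 0 ∧ ρ t (closure D)ᶜ = 0) :
    (∫⁻ t in Set.Icc (0:ℝ) 1,
        Dact δ (volume.restrict D) (μ t) (σ t) (w t) (ρ t) (s t))
      = Dact δ ((volume : Measure (ℝ × EuclideanSpace ℝ (Fin d))).restrict
            (Set.Icc (0:ℝ) 1 ×ˢ D))
          (timeDisintegration μ) (timeDisintegration σ)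
          (fun p => w p.1 p.2) (timeDisintegration ρ) (fun p => s p.1 p.2) := by
  exact ActionAux.main D hDbdd δ hδ μ σ ρ w s hμfin hσfin hρfin hμmeas hσmeas hρmeas
    hwmeas hsmeas
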